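/- For the anisotropic oscillator with Hamiltonian H₁ = (p₁²+p₂²)/2 - (k₁²q₁²+k₂²q₂²)/2 - (β₁q₁+β₂q₂)/2 with k₁,k₂ ≠ 0, the function Φ = (p₁ - (2k₁²q₁+β₁)/(2k₁))·(p₂ + (2k₂²q₂+β₂)/(2k₂)) satisfies {H₁, Φ} = (k₂ - k₁)·Φ along the Hamiltonian flow structure; in particular when k₁ = k₂ the function Φ is an integral of motion: {H₁,Φ} = 0. -/

import Mathlib

lemma dq (a b c x : ℝ) : deriv (fun t : ℝ => a*t^2 + b*t + c) x = 2*a*x + b := by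
  have h : HasDerivAt (fun t:ℝ => a*t^2+b*t+c) (2*a*x+b) x := by
    have := (((hasDerivAt_pow 2 x).const_mul a).add (((hasDerivAt_id x).const_mul b).add_const c))
    convert this using 1
    · rfl
    · rfl
    · funext t; simp [id]; ring
    · push_cast; ring
  exact h.deriv

noncomputable def pb (F G : ℝ → ℝ → ℝ → ℝ → ℝ) (q₁ q₂ p₁ p₂ : ℝ) : ℝ :=
  deriv (fun t => F q₁ q₂ t p₂) p₁ * deriv (fun t => G t q₂ p₁ p₂) q₁
  - deriv (fun t => F t q₂ p₁ p₂) q₁ * deriv (fun t => G q₁ q₂ t p₂) p₁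
  + deriv (fun t => F q₁ q₂ p₁ t) p₂ * deriv (fun t => G q₁ t p₁ p₂) q₂
  - deriv (fun t => F q₁ t p₁ p₂) q₂ * deriv (fun t => G q₁ q₂ p₁ t) p₂

noncomputable def H₁os (k₁ k₂ β₁ β₂ : ℝ) : ℝ → ℝ → ℝ → ℝ → ℝ :=
  fun q₁ q₂ p₁ p₂ => (p₁^2 + p₂^2)/2 - (k₁^2*q₁^2 + k₂^2*q₂^2)/2 - (β₁*q₁ + β₂*q₂)/2

noncomputable def Φos (k₁ k₂ β₁ β₂ : ℝ) : ℝ → ℝ → ℝ → ℝ → ℝ :=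
  fun q₁ q₂ p₁ p₂ => (p₁ - (2*k₁^2*q₁ + β₁)/(2*k₁)) * (p₂ + (2*k₂^2*q₂ + β₂)/(2*k₂))

theorem stmt5 (k₁ k₂ β₁ β₂ : ℝ) (hk₁ : k₁ ≠ 0) (hk₂ : k₂ ≠ 0) (q₁ q₂ p₁ p₂ : ℝ) :
    pb (H₁os k₁ k₂ β₁ β₂) (Φos k₁ k₂ β₁ β₂) q₁ q₂ p₁ p₂ =
      (k₂ - k₁) * Φos k₁ k₂ β₁ β₂ q₁ q₂ p₁ p₂ ∧
    (k₁ = k₂ → pb (H₁os k₁ k₂ β₁ β₂) (Φos k₁ k₂ β₁ β₂) q₁ q₂ p₁ p₂ = 0) := by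
  have key : pb (H₁os k₁ k₂ β₁ β₂) (Φos k₁ k₂ β₁ β₂) q₁ q₂ p₁ p₂ =
      (k₂ - k₁) * Φos k₁ k₂ β₁ β₂ q₁ q₂ p₁ p₂ := by
    simp only [pb, H₁os, Φos]
    have e1 : (fun t:ℝ => (t^2 + p₂^2)/2 - (k₁^2*q₁^2 + k₂^2*q₂^2)/2 - (β₁*q₁ + β₂*q₂)/2)
        = fun t:ℝ => (1/2)*t^2 + 0*t + (p₂^2/2 - (k₁^2*q₁^2 + k₂^2*q₂^2)/2 - (β₁*q₁ + β₂*q₂)/2) := by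
      funext t; ring
    have e2 : (fun t:ℝ => (p₁^2 + p₂^2)/2 - (k₁^2*t^2 + k₂^2*q₂^2)/2 - (β₁*t + β₂*q₂)/2)
        = fun t:ℝ => (-(k₁^2)/2)*t^2 + (-β₁/2)*t + ((p₁^2 + p₂^2)/2 - k₂^2*q₂^2/2 - β₂*q₂/2) := by
      funext t; ring
    have e3 : (fun t:ℝ => (p₁^2 + t^2)/2 - (k₁^2*q₁^2 + k₂^2*q₂^2)/2 - (β₁*q₁ + β₂*q₂)/2)
        = fun t:ℝ => (1/2)*t^2 + 0*t + (p₁^2/2 - (k₁^2*q₁^2 + k₂^2*q₂^2)/2 - (β₁*q₁ + β₂*q₂)/2) := by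
      funext t; ring
    have e4 : (fun t:ℝ => (p₁^2 + p₂^2)/2 - (k₁^2*q₁^2 + k₂^2*t^2)/2 - (β₁*q₁ + β₂*t)/2)
        = fun t:ℝ => (-(k₂^2)/2)*t^2 + (-β₂/2)*t + ((p₁^2 + p₂^2)/2 - k₁^2*q₁^2/2 - β₁*q₁/2) := by
      funext t; ring
    have g1 : (fun t:ℝ => (p₁ - (2*k₁^2*t + β₁)/(2*k₁)) * (p₂ + (2*k₂^2*q₂ + β₂)/(2*k₂)))
        = fun t:ℝ => 0*t^2 + (-(2*k₁^2/(2*k₁)) * (p₂ + (2*k₂^2*q₂ + β₂)/(2*k₂)))*t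
          + ((p₁ - β₁/(2*k₁)) * (p₂ + (2*k₂^2*q₂ + β₂)/(2*k₂))) := by
      funext t; ring
    have g2 : (fun t:ℝ => (t - (2*k₁^2*q₁ + β₁)/(2*k₁)) * (p₂ + (2*k₂^2*q₂ + β₂)/(2*k₂)))
        = fun t:ℝ => 0*t^2 + (p₂ + (2*k₂^2*q₂ + β₂)/(2*k₂))*t
          + (-((2*k₁^2*q₁ + β₁)/(2*k₁)) * (p₂ + (2*k₂^2*q₂ + β₂)/(2*k₂))) := by
      funext t; ring
    have g3 : (fun t:ℝ => (p₁ - (2*k₁^2*q₁ + β₁)/(2*k₁)) * (p₂ + (2*k₂^2*t + β₂)/(2*k₂)))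
        = fun t:ℝ => 0*t^2 + ((p₁ - (2*k₁^2*q₁ + β₁)/(2*k₁)) * (2*k₂^2/(2*k₂)))*t
          + ((p₁ - (2*k₁^2*q₁ + β₁)/(2*k₁)) * (p₂ + β₂/(2*k₂))) := by
      funext t; ring
    have g4 : (fun t:ℝ => (p₁ - (2*k₁^2*q₁ + β₁)/(2*k₁)) * (t + (2*k₂^2*q₂ + β₂)/(2*k₂)))
        = fun t:ℝ => 0*t^2 + (p₁ - (2*k₁^2*q₁ + β₁)/(2*k₁))*t
          + ((p₁ - (2*k₁^2*q₁ + β₁)/(2*k₁)) * ((2*k₂^2*q₂ + β₂)/(2*k₂))) := by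
      funext t; ring
    rw [e1, e2, e3, e4, g1, g2, g3, g4]
    simp only [dq]
    field_simp
    ring
  exact ⟨key, fun h => by rw [key, h]; ring⟩
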